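/- (Quasi-isomorphisms of ħ-series complexes.) Let n and m be integers, let (C, (d_i)) and (D, (∂_i)) be ħ-series data satisfying the convolution relations ∑_{a+b=i} d_a d_b = 0 and ∑_{a+b=i} ∂_a ∂_b = 0 for all i ≥ 0, with associated ħ-series complexes (̃C, d) and (̃D, ∂), and let F = ∑_{i≥0} F_i ħ^i be an ħ-series map of degree m that is a chain map, F ∘ d = ∂ ∘ F. If F_0 : (C, d_0) → (D, ∂_0) is a quasi-isomorphism (it induces an isomorphism on cohomology in every degree), then F is a quasi-isomorphism as well: the induced map H^k(̃C, d) → H^{k+m}(̃D, ∂) is an isomorphism for every integer k. -/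

import Mathlib

open Finset

/-- Transport an element along an equality of degrees. -/
def degTr (C : ℤ → Type) [∀ k, AddCommGroup (C k)] [∀ k, Module ℚ (C k)]
    {k k' : ℤ} (h : k = k') : C k →ₗ[ℚ] C k' := by
  subst h; exact LinearMap.id

/-- The degree-`m` piece of the ħ-series complex: formal series `∑_{j ≥ 0} c_j ħ^j`
with `c_j ∈ C^{m + (n-2)j}` (here `|ħ| = 2 - n`). -/
def TildeC (n : ℤ) (C : ℤ → Type) (m : ℤ) : Type :=
  ∀ j : ℕ, C (m + (n - 2) * j)

instance (n : ℤ) (C : ℤ → Type) [∀ k, AddCommGroup (C k)] (m : ℤ) :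
    AddCommGroup (TildeC n C m) :=
  inferInstanceAs (AddCommGroup (∀ j : ℕ, C (m + (n - 2) * j)))

instance (n : ℤ) (C : ℤ → Type) [∀ k, AddCommGroup (C k)] [∀ k, Module ℚ (C k)] (m : ℤ) :
    Module ℚ (TildeC n C m) :=
  inferInstanceAs (Module ℚ (∀ j : ℕ, C (m + (n - 2) * j)))

/-- The degree-one map `d = d₀ + d₁ħ + d₂ħ² + ⋯` of the ħ-series complex:
`d(∑ c_j ħ^j) = ∑ (∑_{a+b=j} d_a(c_b)) ħ^j`. -/
def seriesD (n : ℤ) (C : ℤ → Type) [∀ k, AddCommGroup (C k)] [∀ k, Module ℚ (C k)]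
    (d : ∀ (i : ℕ) (k : ℤ), C k →ₗ[ℚ] C (k + 1 + (n - 2) * i))
    (m : ℤ) (v : TildeC n C m) : TildeC n C (m + 1) :=
  fun j =>
    ∑ p ∈ (antidiagonal j).attach,
      degTr C
        (by
          have h : ((p.1.1 : ℤ) + (p.1.2 : ℤ)) = (j : ℤ) := by
            exact_mod_cast mem_antidiagonal.mp p.2
          linear_combination (n - 2) * h)
        (d p.1.1 (m + (n - 2) * p.1.2) (v p.1.2))

/-- The convolution relations `∑_{a+b=i} d_a ∘ d_b = 0` (as maps `C → C`),
beginning with `d₀² = 0`, `d₁d₀ + d₀d₁ = 0`, …. -/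
def convRel (n : ℤ) (C : ℤ → Type) [∀ k, AddCommGroup (C k)] [∀ k, Module ℚ (C k)]
    (d : ∀ (i : ℕ) (k : ℤ), C k →ₗ[ℚ] C (k + 1 + (n - 2) * i)) : Prop :=
  ∀ (i : ℕ) (k : ℤ) (x : C k),
    (∑ p ∈ (antidiagonal i).attach,
        degTr C
          (by
            have h : ((p.1.1 : ℤ) + (p.1.2 : ℤ)) = (i : ℤ) := by
              exact_mod_cast mem_antidiagonal.mp p.2
            linear_combination (n - 2) * h)
          (d p.1.1 (k + 1 + (n - 2) * p.1.2) (d p.1.2 k x))) =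
      (0 : C (k + 2 + (n - 2) * i))

/-- Transport of series along an equality of degrees. -/
def tildeTr (n : ℤ) (C : ℤ → Type) [∀ k, AddCommGroup (C k)] [∀ k, Module ℚ (C k)]
    {m m' : ℤ} (h : m = m') (v : TildeC n C m) : TildeC n C m' :=
  fun j => degTr C (by rw [h]) (v j)

/-- A degree-`m` ħ-series map `F = ∑_{i≥0} F_i ħ^i` between ħ-series complexes:
`F(∑ c_j ħ^j) = ∑ (∑_{a+b=j} F_a(c_b)) ħ^j`. -/
def seriesMapDeg (n m : ℤ) (C D : ℤ → Type)
    [∀ k, AddCommGroup (C k)] [∀ k, Module ℚ (C k)]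
    [∀ k, AddCommGroup (D k)] [∀ k, Module ℚ (D k)]
    (F : ∀ (i : ℕ) (k : ℤ), C k →ₗ[ℚ] D (k + m + (n - 2) * i))
    (k : ℤ) (v : TildeC n C k) : TildeC n D (k + m) :=
  fun j =>
    ∑ p ∈ (antidiagonal j).attach,
      degTr D
        (by
          have h : ((p.1.1 : ℤ) + (p.1.2 : ℤ)) = (j : ℤ) := by
            exact_mod_cast mem_antidiagonal.mp p.2
          linear_combination (n - 2) * h)
        (F p.1.1 (k + (n - 2) * p.1.2) (v p.1.2))


section API
variable (C : ℤ → Type) [∀ k, AddCommGroup (C k)] [∀ k, Module ℚ (C k)]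

@[simp] lemma degTr_refl {k : ℤ} (h : k = k) (x : C k) : degTr C h x = x := rfl

lemma degTr_degTr {k k' k'' : ℤ} (h : k = k') (h' : k' = k'') (x : C k) :
    degTr C h' (degTr C h x) = degTr C (h.trans h') x := by subst h; subst h'; rfl

def Iota (k : ℤ) : C k →ₗ[ℚ] (∀ k, C k) := LinearMap.single ℚ C k

lemma Iota_degTr {k k' : ℤ} (h : k = k') (x : C k) :
    Iota C k' (degTr C h x) = Iota C k x := by subst h; rfl

lemma Iota_inj (k : ℤ) {x y : C k} (h : Iota C k x = Iota C k y) : x = y := by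
  have := congrFun h k
  simpa [Iota] using this

end API

section Endo
variable {C D : ℤ → Type} [∀ k, AddCommGroup (C k)] [∀ k, Module ℚ (C k)]
  [∀ k, AddCommGroup (D k)] [∀ k, Module ℚ (D k)]

lemma single_apply_tr (k j : ℤ) (x : C k) (h : j = k) :
    Pi.single (M := C) k x j = degTr C h.symm x := by subst h; simp

lemma fam_degTr (s : ℤ) (g : ∀ k, C k →ₗ[ℚ] D (k + s)) {a b : ℤ} (h : a = b) (x : C a) :
    g b (degTr C h x) = degTr D (by rw [h]) (g a x) := by subst h; rfl

/-- Extend a degree-`s` family of maps to an endomorphism-style map on products. -/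
def convEndo (s : ℤ) (g : ∀ k, C k →ₗ[ℚ] D (k + s)) : (∀ k, C k) →ₗ[ℚ] (∀ k, D k) where
  toFun f := fun k => degTr D (by ring : (k - s) + s = k) (g (k - s) (f (k - s)))
  map_add' f f' := by funext k; simp
  map_smul' c f := by funext k; simp

lemma convEndo_single (s : ℤ) (g : ∀ k, C k →ₗ[ℚ] D (k + s)) (k : ℤ) (x : C k) :
    convEndo s g (Iota C k x) = Iota D (k + s) (g k x) := by
  funext k'
  show degTr D _ (g (k' - s) (Pi.single k x (k' - s))) = Pi.single (k + s) (g k x) k'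
  by_cases h : k' = k + s
  · rw [single_apply_tr (C := C) k (k' - s) x (by omega),
      fam_degTr s g (show k = k' - s by omega), degTr_degTr,
      single_apply_tr (C := D) (k + s) k' (g k x) h]
  · rw [Pi.single_eq_of_ne (by omega : k' - s ≠ k), Pi.single_eq_of_ne h]
    simp

end Endo

lemma sum_triple {M : Type} [AddCommMonoid M] (j : ℕ) (f : ℕ → ℕ → ℕ → M) :
    ∑ q ∈ (antidiagonal j).erase (0, j), ∑ r ∈ antidiagonal q.2, f q.1 r.1 r.2
    = ∑ q ∈ (antidiagonal j).erase (0, j), ∑ s ∈ (antidiagonal q.1).erase (0, q.1),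
        f s.1 s.2 q.2 := by
  rw [Finset.sum_sigma', Finset.sum_sigma']
  apply Finset.sum_nbij' (i := fun p => ⟨(p.1.1 + p.2.1, p.2.2), (p.1.1, p.2.1)⟩)
    (j := fun p => ⟨(p.2.1, p.2.2 + p.1.2), (p.2.2, p.1.2)⟩)
  · rintro ⟨⟨a, c⟩, ⟨r1, r2⟩⟩ hp
    simp only [Finset.mem_sigma, mem_erase, HasAntidiagonal.mem_antidiagonal] at hp
    obtain ⟨⟨h1, h2⟩, h3⟩ := hp
    have ha : a ≠ 0 := by rintro rfl; exact h1 (by simp; omega)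
    simp only [Finset.mem_sigma, mem_erase, HasAntidiagonal.mem_antidiagonal, ne_eq, Prod.mk.injEq,
      not_and, and_true]
    omega
  · rintro ⟨⟨q1, q2⟩, ⟨s1, s2⟩⟩ hp
    simp only [Finset.mem_sigma, mem_erase, HasAntidiagonal.mem_antidiagonal] at hp
    obtain ⟨⟨h1, h2⟩, h3, h4⟩ := hp
    have hs : s1 ≠ 0 := by rintro rfl; exact h3 (by simp; omega)
    simp only [Finset.mem_sigma, mem_erase, HasAntidiagonal.mem_antidiagonal, ne_eq, Prod.mk.injEq,
      not_and, and_true]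
    omega
  · rintro ⟨⟨a, c⟩, ⟨r1, r2⟩⟩ hp
    simp only [Finset.mem_sigma, mem_erase, HasAntidiagonal.mem_antidiagonal] at hp
    simp only [Sigma.mk.inj_iff, Prod.mk.injEq, heq_eq_eq, and_true, true_and]
    omega
  · rintro ⟨⟨q1, q2⟩, ⟨s1, s2⟩⟩ hp
    simp only [Finset.mem_sigma, mem_erase, HasAntidiagonal.mem_antidiagonal] at hp
    simp only [Sigma.mk.inj_iff, Prod.mk.injEq, heq_eq_eq, and_true, true_and]
    omega
  · rintro ⟨⟨a, c⟩, ⟨r1, r2⟩⟩ hp; rfl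

lemma tilde_exact (n : ℤ) (M : Type) [AddCommGroup M] [Module ℚ M]
    (ε : ℕ → M →ₗ[ℚ] M) (S : ℤ → Submodule ℚ M) (t : ℤ)
    (hmap : ∀ (i : ℕ) (r : ℤ) (x : M), x ∈ S r → ε i x ∈ S (r + 1 + (n - 2) * i))
    (hconv : ∀ (i : ℕ) (r : ℤ) (x : M), x ∈ S r →
      ∑ p ∈ antidiagonal i, ε p.1 (ε p.2 x) = 0)
    (hexact : ∀ (r : ℤ) (x : M), x ∈ S (r + 1) → ε 0 x = 0 → ∃ a ∈ S r, ε 0 a = x)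
    (v : ℕ → M) (hv : ∀ j : ℕ, v j ∈ S (t + (n - 2) * j))
    (hcoc : ∀ j : ℕ, ∑ p ∈ antidiagonal j, ε p.1 (v p.2) = 0) :
    ∃ u : ℕ → M, (∀ j : ℕ, u j ∈ S (t - 1 + (n - 2) * j)) ∧
      ∀ j : ℕ, ∑ p ∈ antidiagonal j, ε p.1 (u p.2) = v j := by
  classical
  have hmemE : ∀ (j : ℕ) (q : ℕ × ℕ), q ∈ (antidiagonal j).erase (0, j) →
      q.1 + q.2 = j ∧ q.2 < j := by
    intro j q hq
    rw [mem_erase, HasAntidiagonal.mem_antidiagonal] at hq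
    obtain ⟨q1, q2⟩ := q
    simp only [ne_eq, Prod.mk.injEq, not_and] at hq
    constructor
    · exact hq.2
    · by_cases h0 : q1 = 0
      · exact absurd (by omega) (hq.1 h0)
      · omega
  set body : ∀ j : ℕ, (∀ i, i < j → M) → M := fun j ih =>
    if h : ∃ a, a ∈ S (t - 1 + (n - 2) * j) ∧
        ε 0 a = v j - ∑ q ∈ ((antidiagonal j).erase (0, j)).attach,
          ε q.1.1 (ih q.1.2 (hmemE j q.1 q.2).2)
      then h.choose else 0 with hbody
  set u : ℕ → M := fun j => (Nat.lt_wfRel.wf).fix body j with hu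
  have hufix : ∀ j, u j = body j fun i _ => u i := fun j => WellFounded.fix_eq _ _ _
  have key : ∀ j : ℕ, u j ∈ S (t - 1 + (n - 2) * j) ∧
      ε 0 (u j) = v j - ∑ q ∈ (antidiagonal j).erase (0, j), ε q.1 (u q.2) := by
    intro j
    induction j using Nat.strong_induction_on with
    | _ j IH =>
      have hvc : ∀ c, c < j → v c = ∑ p ∈ antidiagonal c, ε p.1 (u p.2) := by
        intro c hc
        rw [← Finset.add_sum_erase _ (fun p : ℕ × ℕ => ε p.1 (u p.2))
          (by simp : ((0 : ℕ), c) ∈ antidiagonal c)]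
        show v c = ε 0 (u c) + ∑ x ∈ (antidiagonal c).erase (0, c), ε x.1 (u x.2)
        rw [(IH c hc).2]; abel
      have hxmem : v j - ∑ q ∈ (antidiagonal j).erase (0, j), ε q.1 (u q.2)
          ∈ S (t + (n - 2) * j) := by
        apply sub_mem (hv j)
        apply sum_mem
        intro q hq
        have h1 := (hmemE j q hq).1
        have h2 : (t - 1 + (n - 2) * q.2) + 1 + (n - 2) * q.1 = t + (n - 2) * j := by
          have hc : ((q.1 : ℤ)) + (q.2 : ℤ) = (j : ℤ) := by exact_mod_cast h1
          linear_combination (n - 2) * hc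
        rw [← h2]
        exact hmap q.1 _ _ (IH q.2 (hmemE j q hq).2).1
      have hx0 : ε 0 (v j - ∑ q ∈ (antidiagonal j).erase (0, j), ε q.1 (u q.2)) = 0 := by
        have hA : ε 0 (v j) + ∑ q ∈ (antidiagonal j).erase (0, j), ε q.1 (v q.2) = 0 := by
          have h0 := hcoc j
          rw [← Finset.add_sum_erase _ (fun q : ℕ × ℕ => ε q.1 (v q.2))
            (by simp : ((0 : ℕ), j) ∈ antidiagonal j)] at h0
          exact h0
        have hB : ∑ q ∈ (antidiagonal j).erase (0, j), ε q.1 (v q.2)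
            = ∑ q ∈ (antidiagonal j).erase (0, j),
                ∑ r ∈ antidiagonal q.2, ε q.1 (ε r.1 (u r.2)) := by
          apply Finset.sum_congr rfl
          intro q hq
          rw [hvc q.2 (hmemE j q hq).2, map_sum]
        have hC : ∀ q ∈ (antidiagonal j).erase (0, j),
            ∑ s ∈ (antidiagonal q.1).erase (0, q.1), ε s.1 (ε s.2 (u q.2))
              = - ε 0 (ε q.1 (u q.2)) := by
          intro q hq
          have h0 : ∑ s ∈ antidiagonal q.1, ε s.1 (ε s.2 (u q.2)) = 0 :=
            hconv q.1 _ _ (IH q.2 (hmemE j q hq).2).1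
          rw [← Finset.add_sum_erase _ (fun s : ℕ × ℕ => ε s.1 (ε s.2 (u q.2)))
            (by simp : ((0 : ℕ), q.1) ∈ antidiagonal q.1)] at h0
          rw [add_comm] at h0
          exact eq_neg_of_add_eq_zero_left h0
        have hD : ∑ q ∈ (antidiagonal j).erase (0, j),
              ∑ r ∈ antidiagonal q.2, ε q.1 (ε r.1 (u r.2))
            = - ∑ q ∈ (antidiagonal j).erase (0, j), ε 0 (ε q.1 (u q.2)) := by
          rw [sum_triple j (fun a b c => ε a (ε b (u c)))]
          rw [← Finset.sum_neg_distrib]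
          exact Finset.sum_congr rfl hC
        have hE0 : ε 0 (v j)
            = ∑ q ∈ (antidiagonal j).erase (0, j), ε 0 (ε q.1 (u q.2)) := by
          rw [hB, hD] at hA
          have h5 := eq_neg_of_add_eq_zero_left hA
          rw [neg_neg] at h5
          exact h5
        rw [map_sub, map_sum, hE0]
        abel
      obtain ⟨a, ha1, ha2⟩ := hexact (t - 1 + (n - 2) * j) _
        (by rw [show t - 1 + (n - 2) * (j : ℤ) + 1 = t + (n - 2) * j by ring]
            exact hxmem)
        hx0
      have hex : ∃ b, b ∈ S (t - 1 + (n - 2) * j) ∧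
          ε 0 b = v j - ∑ q ∈ ((antidiagonal j).erase (0, j)).attach,
            ε q.1.1 (u q.1.2) := by
        refine ⟨a, ha1, ?_⟩
        rw [Finset.sum_attach ((antidiagonal j).erase (0, j))
          (fun q => ε q.1 (u q.2))]
        exact ha2
      rw [hufix j, hbody]
      beta_reduce
      rw [dif_pos hex]
      refine ⟨hex.choose_spec.1, ?_⟩
      rw [hex.choose_spec.2, Finset.sum_attach ((antidiagonal j).erase (0, j))
        (fun q => ε q.1 (u q.2))]
  refine ⟨u, fun j => (key j).1, fun j => ?_⟩
  rw [← Finset.add_sum_erase _ (fun p : ℕ × ℕ => ε p.1 (u p.2))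
    (by simp : ((0 : ℕ), j) ∈ antidiagonal j)]
  show ε 0 (u j) + ∑ x ∈ (antidiagonal j).erase (0, j), ε x.1 (u x.2) = v j
  rw [(key j).2]; abel


/-- Quasi-isomorphisms of ħ-series complexes: if `F = ∑ F_i ħ^i` is a degree-`m`
ħ-series chain map whose leading term `F₀ : (C, d₀) → (D, ∂₀)` is a
quasi-isomorphism, then `F` induces an isomorphism
`H^k(̃C, d) → H^{k+m}(̃D, ∂)` in every degree `k`. -/
theorem seriesMap_quasiIso_of_F0_quasiIso (n m : ℤ) (C D : ℤ → Type)
    [∀ k, AddCommGroup (C k)] [∀ k, Module ℚ (C k)]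
    [∀ k, AddCommGroup (D k)] [∀ k, Module ℚ (D k)]
    (d : ∀ (i : ℕ) (k : ℤ), C k →ₗ[ℚ] C (k + 1 + (n - 2) * i))
    (del : ∀ (i : ℕ) (k : ℤ), D k →ₗ[ℚ] D (k + 1 + (n - 2) * i))
    (hd : convRel n C d) (hdel : convRel n D del)
    (F : ∀ (i : ℕ) (k : ℤ), C k →ₗ[ℚ] D (k + m + (n - 2) * i))
    -- F is a chain map: F ∘ d = ∂ ∘ F
    (hF : ∀ (k : ℤ) (v : TildeC n C k),
      seriesMapDeg n m C D F (k + 1) (seriesD n C d k v) =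
        tildeTr n D (by ring) (seriesD n D del (k + m) (seriesMapDeg n m C D F k v)))
    -- F₀ induces an injective map on cohomology in every degree
    (hF0inj : ∀ (k : ℤ) (x : C k), d 0 k x = 0 →
      (∃ y : D (k + m - 1),
        (degTr D (by push_cast; ring) (del 0 (k + m - 1) y) : D (k + m)) =
          degTr D (by push_cast; ring) (F 0 k x)) →
      ∃ z : C (k - 1), degTr C (by push_cast; ring) (d 0 (k - 1) z) = x)
    -- F₀ induces a surjective map on cohomology in every degree
    (hF0surj : ∀ (k : ℤ) (y : D (k + m)), del 0 (k + m) y = 0 →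
      ∃ x : C k, d 0 k x = 0 ∧
        ∃ z : D (k + m - 1),
          (degTr D (by push_cast; ring) (F 0 k x) : D (k + m)) +
            degTr D (by push_cast; ring) (del 0 (k + m - 1) z) = y) :
    -- F induces an injective map on cohomology in every degree
    (∀ (k : ℤ) (v : TildeC n C k), seriesD n C d k v = 0 →
      (∃ w : TildeC n D (k + m - 1),
        tildeTr n D (by ring) (seriesD n D del (k + m - 1) w) =
          seriesMapDeg n m C D F k v) →
      ∃ u : TildeC n C (k - 1),
        tildeTr n C (by ring) (seriesD n C d (k - 1) u) = v) ∧
    -- F induces a surjective map on cohomology in every degree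
    (∀ (k : ℤ) (w : TildeC n D (k + m)), seriesD n D del (k + m) w = 0 →
      ∃ v : TildeC n C k, seriesD n C d k v = 0 ∧
        ∃ u : TildeC n D (k + m - 1),
          seriesMapDeg n m C D F k v +
            tildeTr n D (by ring) (seriesD n D del (k + m - 1) u) = w) := by
  classical
  -- extended endomorphisms on products
  set dC : ℕ → (∀ k, C k) →ₗ[ℚ] (∀ k, C k) := fun i =>
    convEndo (1 + (n - 2) * i)
      (fun k => (degTr C (show k + 1 + (n - 2) * i = k + (1 + (n - 2) * i) by ring)).comp
        (d i k)) with hdC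
  set dD : ℕ → (∀ k, D k) →ₗ[ℚ] (∀ k, D k) := fun i =>
    convEndo (1 + (n - 2) * i)
      (fun k => (degTr D (show k + 1 + (n - 2) * i = k + (1 + (n - 2) * i) by ring)).comp
        (del i k)) with hdD
  set Fm : ℕ → (∀ k, C k) →ₗ[ℚ] (∀ k, D k) := fun i =>
    convEndo (m + (n - 2) * i)
      (fun k => (degTr D (show k + m + (n - 2) * i = k + (m + (n - 2) * i) by ring)).comp
        (F i k)) with hFm
  have dC_s : ∀ (i : ℕ) (k : ℤ) (x : C k),
      dC i (Iota C k x) = Iota C (k + 1 + (n - 2) * i) (d i k x) := by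
    intro i k x
    rw [hdC]
    rw [convEndo_single]
    exact Iota_degTr C _ _
  have dD_s : ∀ (i : ℕ) (k : ℤ) (y : D k),
      dD i (Iota D k y) = Iota D (k + 1 + (n - 2) * i) (del i k y) := by
    intro i k y
    rw [hdD, convEndo_single]
    exact Iota_degTr D _ _
  have Fm_s : ∀ (i : ℕ) (k : ℤ) (x : C k),
      Fm i (Iota C k x) = Iota D (k + m + (n - 2) * i) (F i k x) := by
    intro i k x
    rw [hFm, convEndo_single]
    exact Iota_degTr D _ _
  -- translation lemmas: Iota of series coefficients
  have T1 : ∀ (k : ℤ) (v : TildeC n C k) (j : ℕ),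
      Iota C (k + 1 + (n - 2) * j) ((seriesD n C d k v) j)
        = ∑ p ∈ antidiagonal j, dC p.1 (Iota C (k + (n - 2) * p.2) (v p.2)) := by
    intro k v j
    rw [← Finset.sum_attach (antidiagonal j)
      (fun p => dC p.1 (Iota C (k + (n - 2) * p.2) (v p.2)))]
    show Iota C (k + 1 + (n - 2) * j)
      (∑ p ∈ (antidiagonal j).attach, degTr C _ (d p.1.1 (k + (n - 2) * p.1.2) (v p.1.2))) = _
    rw [map_sum]
    refine Finset.sum_congr rfl (fun p _ => ?_)
    rw [dC_s, Iota_degTr]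
  have T1D : ∀ (k : ℤ) (w : TildeC n D k) (j : ℕ),
      Iota D (k + 1 + (n - 2) * j) ((seriesD n D del k w) j)
        = ∑ p ∈ antidiagonal j, dD p.1 (Iota D (k + (n - 2) * p.2) (w p.2)) := by
    intro k w j
    rw [← Finset.sum_attach (antidiagonal j)
      (fun p => dD p.1 (Iota D (k + (n - 2) * p.2) (w p.2)))]
    show Iota D (k + 1 + (n - 2) * j)
      (∑ p ∈ (antidiagonal j).attach, degTr D _ (del p.1.1 (k + (n - 2) * p.1.2) (w p.1.2))) = _
    rw [map_sum]
    refine Finset.sum_congr rfl (fun p _ => ?_)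
    rw [dD_s, Iota_degTr]
  have T2 : ∀ (k : ℤ) (v : TildeC n C k) (j : ℕ),
      Iota D (k + m + (n - 2) * j) ((seriesMapDeg n m C D F k v) j)
        = ∑ p ∈ antidiagonal j, Fm p.1 (Iota C (k + (n - 2) * p.2) (v p.2)) := by
    intro k v j
    rw [← Finset.sum_attach (antidiagonal j)
      (fun p => Fm p.1 (Iota C (k + (n - 2) * p.2) (v p.2)))]
    show Iota D (k + m + (n - 2) * j)
      (∑ p ∈ (antidiagonal j).attach, degTr D _ (F p.1.1 (k + (n - 2) * p.1.2) (v p.1.2))) = _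
    rw [map_sum]
    refine Finset.sum_congr rfl (fun p _ => ?_)
    rw [Fm_s, Iota_degTr]
  -- Iota applied to tildeTr coefficients
  have TT : ∀ (k k' : ℤ) (h : k = k') (w : TildeC n D k) (j : ℕ),
      Iota D (k' + (n - 2) * j) ((tildeTr n D h w) j) = Iota D (k + (n - 2) * j) (w j) := by
    intro k k' h w j
    subst h
    exact Iota_degTr D _ _
  have Iota_zero : ∀ (k : ℤ) (x : C k), Iota C k x = 0 → x = 0 := by
    intro k x h
    exact Iota_inj C k (by rw [h, map_zero])
  have IotaD_zero : ∀ (k : ℤ) (y : D k), Iota D k y = 0 → y = 0 := by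
    intro k y h
    exact Iota_inj D k (by rw [h, map_zero])
  -- the coefficientwise chain relation
  have chain : ∀ (i : ℕ) (k : ℤ) (x : C k),
      ∑ p ∈ antidiagonal i, Fm p.1 (dC p.2 (Iota C k x))
        = ∑ p ∈ antidiagonal i, dD p.1 (Fm p.2 (Iota C k x)) := by
    intro i k x
    set v : TildeC n C k :=
      Pi.single (M := fun j : ℕ => C (k + (n - 2) * j)) 0
        (degTr C (show k = k + (n - 2) * ((0 : ℕ) : ℤ) by push_cast; ring) x) with hv
    have hv0 : Iota C (k + (n - 2) * ((0 : ℕ) : ℤ)) (v 0) = Iota C k x := by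
      rw [hv, Pi.single_eq_same]
      exact Iota_degTr C _ _
    have hvne : ∀ j : ℕ, j ≠ 0 → v j = 0 := by
      intro j h0
      rw [hv, Pi.single_eq_of_ne h0]
    have collapseC : ∀ j : ℕ,
        Iota C (k + 1 + (n - 2) * j) ((seriesD n C d k v) j) = dC j (Iota C k x) := by
      intro j
      rw [T1 k v j]
      rw [Finset.sum_eq_single_of_mem (j, 0) (by simp)]
      · show dC j (Iota C (k + (n - 2) * ((0 : ℕ) : ℤ)) (v 0)) = _
        rw [hv0]
      · rintro ⟨q1, q2⟩ hq hne
        rw [HasAntidiagonal.mem_antidiagonal] at hq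
        have h0 : q2 ≠ 0 := by
          intro h
          subst h
          simp only [add_zero] at hq
          subst hq
          exact hne rfl
        show dC q1 (Iota C (k + (n - 2) * (q2 : ℤ)) (v q2)) = 0
        rw [hvne q2 h0, map_zero, map_zero]
    have collapseF : ∀ j : ℕ,
        Iota D (k + m + (n - 2) * j) ((seriesMapDeg n m C D F k v) j)
          = Fm j (Iota C k x) := by
      intro j
      rw [T2 k v j]
      rw [Finset.sum_eq_single_of_mem (j, 0) (by simp)]
      · show Fm j (Iota C (k + (n - 2) * ((0 : ℕ) : ℤ)) (v 0)) = _
        rw [hv0]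
      · rintro ⟨q1, q2⟩ hq hne
        rw [HasAntidiagonal.mem_antidiagonal] at hq
        have h0 : q2 ≠ 0 := by
          intro h
          subst h
          simp only [add_zero] at hq
          subst hq
          exact hne rfl
        show Fm q1 (Iota C (k + (n - 2) * (q2 : ℤ)) (v q2)) = 0
        rw [hvne q2 h0, map_zero, map_zero]
    have hchain := congrArg (Iota D (k + 1 + m + (n - 2) * i))
      (congrFun (hF k v) i)
    rw [T2 (k + 1) (seriesD n C d k v) i] at hchain
    rw [TT (k + m + 1) (k + 1 + m) (by ring) _ i] at hchain
    rw [T1D (k + m) (seriesMapDeg n m C D F k v) i] at hchain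
    calc ∑ p ∈ antidiagonal i, Fm p.1 (dC p.2 (Iota C k x))
        = ∑ p ∈ antidiagonal i, Fm p.1
            (Iota C (k + 1 + (n - 2) * p.2) ((seriesD n C d k v) p.2)) := by
          refine Finset.sum_congr rfl (fun p _ => ?_)
          rw [collapseC p.2]
      _ = ∑ p ∈ antidiagonal i, dD p.1
            (Iota D (k + m + (n - 2) * p.2) ((seriesMapDeg n m C D F k v) p.2)) := hchain
      _ = ∑ p ∈ antidiagonal i, dD p.1 (Fm p.2 (Iota C k x)) := by
          refine Finset.sum_congr rfl (fun p _ => ?_)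
          rw [collapseF p.2]
  -- the cone
  set εm : ℕ → ((∀ k, C k) × (∀ k, D k)) →ₗ[ℚ] ((∀ k, C k) × (∀ k, D k)) := fun i =>
    ((-(dC i)).comp (LinearMap.fst ℚ _ _)).prod
      (((Fm i).comp (LinearMap.fst ℚ _ _)) + ((dD i).comp (LinearMap.snd ℚ _ _))) with hεm
  have εm_eval : ∀ (i : ℕ) (z : (∀ k, C k) × (∀ k, D k)),
      εm i z = (-(dC i z.1), Fm i z.1 + dD i z.2) := fun i z => rfl
  set SS : ℤ → Submodule ℚ ((∀ k, C k) × (∀ k, D k)) := fun r =>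
    (LinearMap.range (Iota C (r + 1))).prod (LinearMap.range (Iota D (r + m))) with hSS
  have mem_SS : ∀ (r : ℤ) (z : (∀ k, C k) × (∀ k, D k)), z ∈ SS r ↔
      ((∃ a, Iota C (r + 1) a = z.1) ∧ (∃ b, Iota D (r + m) b = z.2)) := by
    intro r z
    rw [hSS]
    simp only [Submodule.mem_prod, LinearMap.mem_range]
  have hmapS : ∀ (i : ℕ) (r : ℤ) (z : (∀ k, C k) × (∀ k, D k)), z ∈ SS r →
      εm i z ∈ SS (r + 1 + (n - 2) * i) := by
    intro i r z hz
    obtain ⟨⟨a, ha⟩, ⟨b, hb⟩⟩ := (mem_SS r z).1 hz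
    rw [mem_SS, εm_eval]
    constructor
    · refine ⟨degTr C (by push_cast; ring) (-(d i (r + 1) a)), ?_⟩
      rw [Iota_degTr, map_neg, ← dC_s, ha]
    · refine ⟨degTr D (by push_cast; ring) (F i (r + 1) a)
        + degTr D (by push_cast; ring) (del i (r + m) b), ?_⟩
      rw [map_add, Iota_degTr, Iota_degTr, ← Fm_s, ← dD_s, ha, hb]
  have convC : ∀ (i : ℕ) (k : ℤ) (a : C k),
      ∑ p ∈ antidiagonal i, dC p.1 (dC p.2 (Iota C k a)) = 0 := by
    intro i k a
    rw [← Finset.sum_attach (antidiagonal i) (fun p => dC p.1 (dC p.2 (Iota C k a)))]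
    have step : ∀ p : {x // x ∈ antidiagonal i}, dC p.1.1 (dC p.1.2 (Iota C k a))
        = Iota C (k + 2 + (n - 2) * i)
            (degTr C
              (by
                have h : ((p.1.1 : ℤ) + (p.1.2 : ℤ)) = (i : ℤ) := by
                  exact_mod_cast mem_antidiagonal.mp p.2
                linear_combination (n - 2) * h)
              (d p.1.1 (k + 1 + (n - 2) * p.1.2) (d p.1.2 k a))) := by
      intro p
      rw [dC_s, dC_s]
      exact (Iota_degTr C _ _).symm
    rw [Finset.sum_congr rfl (fun p _ => step p), ← map_sum]
    exact (congrArg (Iota C (k + 2 + (n - 2) * i)) (hd i k a)).trans (map_zero _)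
  have convD : ∀ (i : ℕ) (k : ℤ) (b : D k),
      ∑ p ∈ antidiagonal i, dD p.1 (dD p.2 (Iota D k b)) = 0 := by
    intro i k b
    rw [← Finset.sum_attach (antidiagonal i) (fun p => dD p.1 (dD p.2 (Iota D k b)))]
    have step : ∀ p : {x // x ∈ antidiagonal i}, dD p.1.1 (dD p.1.2 (Iota D k b))
        = Iota D (k + 2 + (n - 2) * i)
            (degTr D
              (by
                have h : ((p.1.1 : ℤ) + (p.1.2 : ℤ)) = (i : ℤ) := by
                  exact_mod_cast mem_antidiagonal.mp p.2
                linear_combination (n - 2) * h)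
              (del p.1.1 (k + 1 + (n - 2) * p.1.2) (del p.1.2 k b))) := by
      intro p
      rw [dD_s, dD_s]
      exact (Iota_degTr D _ _).symm
    rw [Finset.sum_congr rfl (fun p _ => step p), ← map_sum]
    exact (congrArg (Iota D (k + 2 + (n - 2) * i)) (hdel i k b)).trans (map_zero _)
  have chain0 : ∀ (k : ℤ) (x : C k), Fm 0 (dC 0 (Iota C k x)) = dD 0 (Fm 0 (Iota C k x)) := by
    intro k x
    have h := chain 0 k x
    rwa [Finset.Nat.antidiagonal_zero, Finset.sum_singleton, Finset.sum_singleton] at h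
  have hconvS : ∀ (i : ℕ) (r : ℤ) (z : (∀ k, C k) × (∀ k, D k)), z ∈ SS r →
      ∑ p ∈ antidiagonal i, εm p.1 (εm p.2 z) = 0 := by
    intro i r z hz
    obtain ⟨⟨a, ha⟩, ⟨b, hb⟩⟩ := (mem_SS r z).1 hz
    have e1 : ∀ p : ℕ × ℕ, εm p.1 (εm p.2 z)
        = (dC p.1 (dC p.2 z.1),
           -(Fm p.1 (dC p.2 z.1)) + (dD p.1 (Fm p.2 z.1) + dD p.1 (dD p.2 z.2))) := by
      intro p
      rw [εm_eval p.2 z, εm_eval p.1 _]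
      show (-(dC p.1 (-(dC p.2 z.1))), Fm p.1 (-(dC p.2 z.1)) + dD p.1 _) = _
      rw [map_neg, neg_neg, map_neg, map_add]
    rw [Finset.sum_congr rfl (fun p _ => e1 p)]
    have fst0 : ∑ p ∈ antidiagonal i, dC p.1 (dC p.2 z.1) = 0 := by
      rw [← ha]; exact convC i (r + 1) a
    have snd0 : ∑ p ∈ antidiagonal i,
        (-(Fm p.1 (dC p.2 z.1)) + (dD p.1 (Fm p.2 z.1) + dD p.1 (dD p.2 z.2))) = 0 := by
      rw [Finset.sum_add_distrib, Finset.sum_add_distrib, Finset.sum_neg_distrib]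
      rw [← ha, ← hb]
      rw [chain i (r + 1) a, convD i (r + m) b]
      abel
    rw [Prod.ext_iff]
    constructor
    · rw [Prod.fst_sum]
      simpa using fst0
    · rw [Prod.snd_sum]
      simpa using snd0
  have hexactS : ∀ (r : ℤ) (z : (∀ k, C k) × (∀ k, D k)), z ∈ SS (r + 1) →
      εm 0 z = 0 → ∃ w ∈ SS r, εm 0 w = z := by
    intro r z hz h0
    obtain ⟨⟨a, ha⟩, ⟨b, hb⟩⟩ := (mem_SS (r + 1) z).1 hz
    have h1 : dC 0 z.1 = 0 := by
      have := congrArg Prod.fst h0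
      rw [εm_eval] at this
      exact neg_eq_zero.mp this
    have h2 : Fm 0 z.1 + dD 0 z.2 = 0 := by
      have := congrArg Prod.snd h0
      rw [εm_eval] at this
      exact this
    have hda : d 0 (r + 1 + 1) a = 0 := by
      apply Iota_zero
      rw [← dC_s, ha]
      exact h1
    have hexy : ∃ y : D (r + 1 + 1 + m - 1),
        (degTr D (by push_cast; ring) (del 0 (r + 1 + 1 + m - 1) y) : D (r + 1 + 1 + m)) =
          degTr D (by push_cast; ring) (F 0 (r + 1 + 1) a) := by
      refine ⟨degTr D (by ring) (-b), ?_⟩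
      apply Iota_inj D (r + 1 + 1 + m)
      rw [Iota_degTr, Iota_degTr, ← dD_s, ← Fm_s, Iota_degTr, map_neg, map_neg]
      rw [← ha, ← hb] at h2
      exact (neg_eq_of_add_eq_zero_right h2).symm ▸ (eq_neg_of_add_eq_zero_left h2).symm
    obtain ⟨z0, hz0⟩ := hF0inj (r + 1 + 1) a hda hexy
    have hdz : dC 0 (Iota C (r + 1 + 1 - 1) z0) = Iota C (r + 1 + 1) a := by
      rw [dC_s, ← hz0, Iota_degTr]
    set c : D (r + 1 + m) := b + degTr D (by push_cast; ring) (F 0 (r + 1 + 1 - 1) z0)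
      with hc
    have hιc : Iota D (r + 1 + m) c = Iota D (r + 1 + m) b
        + Fm 0 (Iota C (r + 1 + 1 - 1) z0) := by
      rw [hc, map_add, Iota_degTr, ← Fm_s]
    have hc0 : del 0 (r + 1 + m) c = 0 := by
      apply IotaD_zero
      rw [← dD_s, hιc, map_add, ← chain0 (r + 1 + 1 - 1) z0, hdz, ha, hb, add_comm]
      exact h2
    obtain ⟨x0, hx0d, z1, hx0z⟩ := hF0surj (r + 1) c hc0
    refine ⟨(Iota C (r + 1) (x0 - degTr C (by ring) z0),
        Iota D (r + m) (degTr D (by ring) z1)), (mem_SS r _).2 ⟨⟨_, rfl⟩, ⟨_, rfl⟩⟩, ?_⟩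
    rw [εm_eval]
    have h5 : Fm 0 (Iota C (r + 1) x0) + dD 0 (Iota D (r + 1 + m - 1) z1)
        = Iota D (r + 1 + m) c := by
      have h6 := congrArg (Iota D (r + 1 + m)) hx0z
      rw [map_add, Iota_degTr, Iota_degTr, ← Fm_s, ← dD_s] at h6
      exact h6
    rw [Prod.ext_iff]
    constructor
    · show -(dC 0 (Iota C (r + 1) (x0 - degTr C _ z0))) = z.1
      rw [map_sub, map_sub, dC_s, hx0d, map_zero, Iota_degTr, hdz, zero_sub, neg_neg, ha]
    · show Fm 0 (Iota C (r + 1) (x0 - degTr C _ z0))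
        + dD 0 (Iota D (r + m) (degTr D _ z1)) = z.2
      rw [map_sub, map_sub, Iota_degTr, Iota_degTr]
      calc Fm 0 (Iota C (r + 1) x0) - Fm 0 (Iota C (r + 1 + 1 - 1) z0)
            + dD 0 (Iota D (r + 1 + m - 1) z1)
          = (Fm 0 (Iota C (r + 1) x0) + dD 0 (Iota D (r + 1 + m - 1) z1))
            - Fm 0 (Iota C (r + 1 + 1 - 1) z0) := by abel
        _ = (Iota D (r + 1 + m) b + Fm 0 (Iota C (r + 1 + 1 - 1) z0))
            - Fm 0 (Iota C (r + 1 + 1 - 1) z0) := by rw [h5, hιc]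
        _ = Iota D (r + 1 + m) b := by abel
        _ = z.2 := hb
  have TTC : ∀ (k k' : ℤ) (h : k = k') (w : TildeC n C k) (j : ℕ),
      Iota C (k' + (n - 2) * j) ((tildeTr n C h w) j) = Iota C (k + (n - 2) * j) (w j) := by
    intro k k' h w j
    subst h
    exact Iota_degTr C _ _
  have e1 : ∀ (i : ℕ) (z : (∀ k, C k) × (∀ k, D k)), (εm i z).1 = -(dC i z.1) :=
    fun _ _ => rfl
  have e2 : ∀ (i : ℕ) (z : (∀ k, C k) × (∀ k, D k)),
      (εm i z).2 = Fm i z.1 + dD i z.2 := fun _ _ => rfl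
  constructor
  · -- injectivity
    intro k v hv hw
    obtain ⟨w, hw⟩ := hw
    set Z : ℕ → (∀ k, C k) × (∀ k, D k) := fun j =>
      (-(Iota C (k + (n - 2) * j) (v j)), Iota D (k + m - 1 + (n - 2) * j) (w j)) with hZ
    have hZmem : ∀ j : ℕ, Z j ∈ SS (k - 1 + (n - 2) * j) := by
      intro j
      refine (mem_SS _ _).2 ⟨⟨degTr C (by ring) (-(v j)), ?_⟩,
        ⟨degTr D (by ring) (w j), ?_⟩⟩
      · rw [Iota_degTr, map_neg, hZ]
      · rw [Iota_degTr, hZ]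
    have hZcoc : ∀ j : ℕ, ∑ p ∈ antidiagonal j, εm p.1 (Z p.2) = 0 := by
      intro j
      rw [Prod.ext_iff]
      constructor
      · rw [Prod.fst_sum]
        have : ∀ p ∈ antidiagonal j, (εm p.1 (Z p.2)).1
            = dC p.1 (Iota C (k + (n - 2) * p.2) (v p.2)) := by
          intro p _
          rw [e1, hZ]
          show -(dC p.1 (-(Iota C (k + (n - 2) * p.2) (v p.2)))) = _
          rw [map_neg, neg_neg]
        have h9 : (seriesD n C d k v) j = 0 := by rw [hv]; rfl
        rw [Finset.sum_congr rfl this, ← T1 k v j, h9, map_zero]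
        rfl
      · rw [Prod.snd_sum]
        have : ∀ p ∈ antidiagonal j, (εm p.1 (Z p.2)).2
            = -(Fm p.1 (Iota C (k + (n - 2) * p.2) (v p.2)))
              + dD p.1 (Iota D (k + m - 1 + (n - 2) * p.2) (w p.2)) := by
          intro p _
          rw [e2, hZ]
          show Fm p.1 (-(Iota C (k + (n - 2) * p.2) (v p.2))) + _ = _
          rw [map_neg]
        rw [Finset.sum_congr rfl this, Finset.sum_add_distrib, Finset.sum_neg_distrib,
          ← T2 k v j, ← T1D (k + m - 1) w j]
        have h7 := congrArg (Iota D (k + m + (n - 2) * j)) (congrFun hw j)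
        rw [TT (k + m - 1 + 1) (k + m) (by ring) _ j] at h7
        rw [h7]
        exact (neg_add_cancel _).trans rfl
    obtain ⟨U, hUmem, hUeq⟩ := tilde_exact n _ εm SS (k - 1) hmapS hconvS hexactS
      Z hZmem hZcoc
    have hA : ∀ j : ℕ, ∃ a : C (k - 1 - 1 + (n - 2) * j + 1),
        Iota C (k - 1 - 1 + (n - 2) * j + 1) a = (U j).1 :=
      fun j => ((mem_SS _ _).1 (hUmem j)).1
    refine ⟨fun j => degTr C (by push_cast; ring) (hA j).choose, ?_⟩
    funext j
    apply Iota_inj C (k + (n - 2) * j)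
    rw [TTC (k - 1 + 1) k (by ring) _ j]; refine (T1 (k - 1) _ j).trans ?_
    have h8 : ∀ p ∈ antidiagonal j,
        dC p.1 (Iota C (k - 1 + (n - 2) * p.2)
          (degTr C (by push_cast; ring : k - 1 - 1 + (n - 2) * (p.2 : ℤ) + 1
            = k - 1 + (n - 2) * p.2) (hA p.2).choose))
        = -((εm p.1 (U p.2)).1) := by
      intro p _
      rw [Iota_degTr, (hA p.2).choose_spec, e1, neg_neg]
    have h11 : ∑ p ∈ antidiagonal j, ((εm p.1 (U p.2)).1) = (Z j).1 := by
      rw [← Prod.fst_sum, hUeq j]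
    rw [Finset.sum_congr rfl h8, Finset.sum_neg_distrib, h11, hZ]
    show -(-(Iota C (k + (n - 2) * j) (v j))) = _
    rw [neg_neg]
  · -- surjectivity
    intro k w hw
    set Z : ℕ → (∀ k, C k) × (∀ k, D k) := fun j =>
      ((0 : ∀ k, C k), Iota D (k + m + (n - 2) * j) (w j)) with hZ
    have hZmem : ∀ j : ℕ, Z j ∈ SS (k + (n - 2) * j) := by
      intro j
      refine (mem_SS _ _).2 ⟨⟨0, ?_⟩, ⟨degTr D (by ring) (w j), ?_⟩⟩
      · rw [map_zero, hZ]
      · rw [Iota_degTr, hZ]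
    have hZcoc : ∀ j : ℕ, ∑ p ∈ antidiagonal j, εm p.1 (Z p.2) = 0 := by
      intro j
      rw [Prod.ext_iff]
      constructor
      · rw [Prod.fst_sum]
        have : ∀ p ∈ antidiagonal j, (εm p.1 (Z p.2)).1 = 0 := by
          intro p _
          rw [e1, hZ]
          show -(dC p.1 0) = 0
          rw [map_zero, neg_zero]
        rw [Finset.sum_congr rfl this, Finset.sum_const_zero]
        rfl
      · rw [Prod.snd_sum]
        have : ∀ p ∈ antidiagonal j, (εm p.1 (Z p.2)).2
            = dD p.1 (Iota D (k + m + (n - 2) * p.2) (w p.2)) := by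
          intro p _
          rw [e2, hZ]
          show Fm p.1 0 + _ = _
          rw [map_zero, zero_add]
        have h9 : (seriesD n D del (k + m) w) j = 0 := by rw [hw]; rfl
        rw [Finset.sum_congr rfl this, ← T1D (k + m) w j, h9, map_zero]
        rfl
    obtain ⟨U, hUmem, hUeq⟩ := tilde_exact n _ εm SS k hmapS hconvS hexactS Z hZmem hZcoc
    have hA : ∀ j : ℕ, ∃ a : C (k - 1 + (n - 2) * j + 1),
        Iota C (k - 1 + (n - 2) * j + 1) a = (U j).1 :=
      fun j => ((mem_SS _ _).1 (hUmem j)).1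
    have hB : ∀ j : ℕ, ∃ b : D (k - 1 + (n - 2) * j + m),
        Iota D (k - 1 + (n - 2) * j + m) b = (U j).2 :=
      fun j => ((mem_SS _ _).1 (hUmem j)).2
    set v : TildeC n C k := fun j => degTr C (by push_cast; ring) (hA j).choose with hvdef
    set u : TildeC n D (k + m - 1) := fun j => degTr D (by push_cast; ring) (hB j).choose
      with hudef
    have hιv : ∀ j : ℕ, Iota C (k + (n - 2) * j) (v j) = (U j).1 := by
      intro j
      rw [hvdef, Iota_degTr, (hA j).choose_spec]
    have hιu : ∀ j : ℕ, Iota D (k + m - 1 + (n - 2) * j) (u j) = (U j).2 := by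
      intro j
      rw [hudef, Iota_degTr, (hB j).choose_spec]
    refine ⟨v, ?_, u, ?_⟩
    · funext j
      apply Iota_zero (k + 1 + (n - 2) * j)
      rw [T1 k v j]
      have h8 : ∀ p ∈ antidiagonal j,
          dC p.1 (Iota C (k + (n - 2) * p.2) (v p.2)) = -((εm p.1 (U p.2)).1) := by
        intro p _
        rw [hιv p.2, e1, neg_neg]
      have h11 : ∑ p ∈ antidiagonal j, ((εm p.1 (U p.2)).1) = (Z j).1 := by
        rw [← Prod.fst_sum, hUeq j]
      rw [Finset.sum_congr rfl h8, Finset.sum_neg_distrib, h11, hZ]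
      show -(0 : ∀ k, C k) = 0
      rw [neg_zero]
    · funext j
      apply Iota_inj D (k + m + (n - 2) * j)
      show Iota D (k + m + (n - 2) * j)
        ((seriesMapDeg n m C D F k v) j
          + (tildeTr n D (by ring) (seriesD n D del (k + m - 1) u)) j) = _
      rw [map_add, T2 k v j, TT (k + m - 1 + 1) (k + m) (by ring) _ j,
        T1D (k + m - 1) u j]
      have h8 : ∀ p ∈ antidiagonal j,
          Fm p.1 (Iota C (k + (n - 2) * p.2) (v p.2)) = Fm p.1 ((U p.2).1) := by
        intro p _
        rw [hιv p.2]
      have h9 : ∀ p ∈ antidiagonal j,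
          dD p.1 (Iota D (k + m - 1 + (n - 2) * p.2) (u p.2)) = dD p.1 ((U p.2).2) := by
        intro p _
        rw [hιu p.2]
      rw [Finset.sum_congr rfl h8, Finset.sum_congr rfl h9, ← Finset.sum_add_distrib]
      have h10 : ∀ p ∈ antidiagonal j,
          Fm p.1 ((U p.2).1) + dD p.1 ((U p.2).2) = (εm p.1 (U p.2)).2 := by
        intro p _
        rw [e2]
      have h11 : ∑ p ∈ antidiagonal j, ((εm p.1 (U p.2)).2) = (Z j).2 := by
        rw [← Prod.snd_sum, hUeq j]
      rw [Finset.sum_congr rfl h10, h11, hZ]
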